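/- arXiv:1803.03339 — 3 statements merged into one kernel-verified Lean document; each statement's English description precedes it below -/
import Mathlib

section
/- Let p be an odd prime and 𝔯 ≥ 3. Let C_0 = (⋃_{l=0}^{(p^{𝔯−1}−1)/2} D_l^{(p^𝔯)}) ∪ pZ_{p^{𝔯−1}} and C_1 = ⋃_{l=(p^{𝔯−1}+1)/2}^{p^{𝔯−1}−1} D_l^{(p^𝔯)}. Let v be coprime to p, 0 ≤ v < p^{𝔯−1}, and V_v = {v, v+p^{𝔯−1}, ..., v+(p−1)p^{𝔯−1}}. If Q_{𝔯−1}(v) = j + i·p^{𝔯−2} with 0 ≤ i < p and 0 ≤ j ≤ (p^{𝔯−2}−1)/2, then |V_v ∩ C_0| = (p+1)/2 and |V_v ∩ C_1| = (p−1)/2. -/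
/-- The Euler quotient modulo `p^s` of `u`, as a representative in `{0,...,p^s-1}`. -/
def eulerQuotient (p s u : ℕ) : ℕ :=
  ((u ^ (p ^ (s - 1) * (p - 1)) - 1) / p ^ s) % p ^ s

/-- The level set `D_l^{(p^r)} = {u : 0 ≤ u < p^r, gcd(u,p)=1, Q_{r-1}(u)=l}`. -/
def levelSetD (p r l : ℕ) : Finset ℕ :=
  (Finset.range (p ^ r)).filter (fun u => Nat.Coprime u p ∧ eulerQuotient p (r - 1) u = l)

/-- `C_0 = (⋃_{l=0}^{(p^{r-1}-1)/2} D_l^{(p^r)}) ∪ pZ_{p^{r-1}}`. -/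
def classC0 (p r : ℕ) : Finset ℕ :=
  (Finset.range ((p ^ (r - 1) - 1) / 2 + 1)).biUnion (levelSetD p r) ∪
    (Finset.range (p ^ r)).filter (fun n => p ∣ n)

/-- `C_1 = ⋃_{l=(p^{r-1}+1)/2}^{p^{r-1}-1} D_l^{(p^r)}`. -/
def classC1 (p r : ℕ) : Finset ℕ :=
  (Finset.Icc ((p ^ (r - 1) + 1) / 2) (p ^ (r - 1) - 1)).biUnion (levelSetD p r)

/-- The fiber `V_v = {v, v + p^{r-1}, ..., v + (p-1)p^{r-1}}`. -/
def fiberSet (p r v : ℕ) : Finset ℕ :=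
  (Finset.range p).image (fun k => v + k * p ^ (r - 1))

lemma binom_sq (a b : ℕ) : ∀ n : ℕ, ∃ M : ℕ, (a + b)^n = a^n + n * a^(n-1) * b + M * b^2 := by
  intro n
  induction n with
  | zero => exact ⟨0, by simp⟩
  | succ n ih =>
    obtain ⟨M, hM⟩ := ih
    cases n with
    | zero => exact ⟨0, by simp⟩
    | succ m =>
      refine ⟨(m+1) * a ^ m + M * a + M * b, ?_⟩
      have h1 : (a+b)^(m+1+1) = (a+b)^(m+1) * (a+b) := pow_succ _ _
      rw [h1, hM]
      simp only [Nat.add_sub_cancel]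
      ring

lemma euler_dvd (p : ℕ) (hp : p.Prime) (s : ℕ) (hs : 1 ≤ s) (u : ℕ)
    (hup : Nat.Coprime u p) : p ^ s ∣ u ^ (p ^ (s-1) * (p-1)) - 1 := by
  have hu1 : 1 ≤ u := by
    rcases Nat.eq_zero_or_pos u with h | h
    · exfalso
      rw [h, Nat.coprime_zero_left] at hup
      exact hp.one_lt.ne' hup
    · exact h
  have he : (p ^ s).totient = p ^ (s-1) * (p-1) := Nat.totient_prime_pow hp (by omega)
  have h := Nat.ModEq.pow_totient (hup.pow_right s)
  rw [he] at h
  exact (Nat.modEq_iff_dvd' (Nat.one_le_pow _ _ hu1)).mp h.symm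

lemma eulerQuotient_add (p : ℕ) (hp : p.Prime) (s : ℕ) (hs : 1 ≤ s) (v : ℕ)
    (hvp : Nat.Coprime v p) (k : ℕ) :
    eulerQuotient p s (v + k * p ^ s)
      = (eulerQuotient p s v
          + k * ((p - 1) * v ^ (p ^ (s - 1) * (p - 1) - 1)) * p ^ (s - 1)) % p ^ s := by
  have hpos : 0 < p ^ s := Nat.pow_pos hp.pos
  have hv1 : 1 ≤ v := by
    rcases Nat.eq_zero_or_pos v with h | h
    · exfalso; rw [h, Nat.coprime_zero_left] at hvp; exact hp.one_lt.ne' hvp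
    · exact h
  have hpp : p ^ s = p ^ (s-1) * p := by
    conv_lhs => rw [show s = (s-1)+1 by omega]
    rw [pow_succ]
  set e := p ^ (s-1) * (p-1) with he_def
  have hucop : Nat.Coprime (v + k * p ^ s) p := by
    have h1 : v + k * p ^ s = v + (k * p ^ (s-1)) * p := by rw [hpp]; ring
    rw [h1, Nat.coprime_add_mul_right_left]
    exact hvp
  have hu1 : 1 ≤ v + k * p ^ s := by omega
  have hd1 := euler_dvd p hp s hs v hvp
  have hd2 := euler_dvd p hp s hs (v + k * p ^ s) hucop
  obtain ⟨q, hq⟩ := hd1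
  obtain ⟨q', hq'⟩ := hd2
  rw [← he_def] at hq hq'
  have hve : v ^ e = p ^ s * q + 1 := by
    have h1 : 1 ≤ v ^ e := Nat.one_le_pow _ _ hv1
    omega
  have hue : (v + k * p ^ s) ^ e = p ^ s * q' + 1 := by
    have h1 : 1 ≤ (v + k * p ^ s) ^ e := Nat.one_le_pow _ _ hu1
    omega
  obtain ⟨M, hM⟩ := binom_sq v (k * p ^ s) e
  rw [hue, hve] at hM
  have hq'eq : q' = q + e * v ^ (e-1) * k + M * (k^2 * p^s) := by
    have h2 : p ^ s * q + 1 + e * v ^ (e - 1) * (k * p ^ s) + M * (k * p ^ s) ^ 2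
        = p ^ s * (q + e * v ^ (e-1) * k + M * (k^2 * p^s)) + 1 := by ring
    rw [h2] at hM
    have h3 : p ^ s * q' = p ^ s * (q + e * v ^ (e-1) * k + M * (k^2 * p^s)) :=
      Nat.add_right_cancel hM
    exact Nat.eq_of_mul_eq_mul_left hpos h3
  show ((v + k * p ^ s) ^ e - 1) / p ^ s % p ^ s = _
  rw [hue, Nat.add_sub_cancel, Nat.mul_div_cancel_left _ hpos, hq'eq]
  show _ = ((v ^ e - 1) / p ^ s % p ^ s + k * ((p - 1) * v ^ (e - 1)) * p ^ (s - 1)) % p ^ s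
  rw [hve, Nat.add_sub_cancel, Nat.mul_div_cancel_left _ hpos]
  rw [Nat.mod_add_mod]
  have h4 : q + e * v ^ (e-1) * k + M * (k^2 * p^s)
      = (q + k * ((p - 1) * v ^ (e - 1)) * p ^ (s - 1)) + (M * k^2) * p ^ s := by
    rw [he_def]; ring
  rw [h4, Nat.add_mul_mod_self_right]

lemma mod_decomp (p s j w : ℕ) (hp : 0 < p) (hj : j < p ^ s) :
    (j + w * p ^ s) % (p ^ s * p) = j + w % p * p ^ s := by
  have h1 : j + w * p ^ s = (j + w % p * p ^ s) + (w / p) * (p ^ s * p) := by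
    conv_lhs => rw [← Nat.mod_add_div w p]
    ring
  rw [h1, Nat.add_mul_mod_self_right]
  apply Nat.mod_eq_of_lt
  have h2 : w % p < p := Nat.mod_lt _ hp
  have h3 : 0 < p ^ s := Nat.pow_pos hp
  have h4 : w % p * p ^ s ≤ (p - 1) * p ^ s := Nat.mul_le_mul_right _ (by omega)
  have h5 : (p - 1) * p ^ s + p ^ s = p ^ s * p := by
    have : p - 1 + 1 = p := by omega
    calc (p-1) * p^s + p^s = (p - 1 + 1) * p ^ s := by ring
    _ = p ^ s * p := by rw [this]; ring
  omega

lemma mem_C0_iff (p r : ℕ) (hp : 1 < p) (u : ℕ) (hu : u < p ^ r) (hcop : u.Coprime p) :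
    u ∈ classC0 p r ↔ eulerQuotient p (r-1) u ≤ (p ^ (r-1) - 1) / 2 := by
  unfold classC0 levelSetD
  simp only [Finset.mem_union, Finset.mem_biUnion, Finset.mem_range, Finset.mem_filter]
  constructor
  · rintro (⟨l, hl, -, -, hQ⟩ | ⟨-, hdvd⟩)
    · omega
    · exfalso
      have h1 : p ∣ Nat.gcd p u := Nat.dvd_gcd dvd_rfl hdvd
      have h2 : Nat.gcd p u = 1 := Nat.coprime_comm.mp hcop
      rw [h2] at h1
      have := Nat.eq_one_of_dvd_one h1
      omega
  · intro h
    exact Or.inl ⟨_, by omega, hu, hcop, rfl⟩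

lemma mem_C1_iff (p r u : ℕ) (hu : u < p ^ r) (hcop : u.Coprime p) :
    u ∈ classC1 p r ↔ (p ^ (r-1) + 1)/2 ≤ eulerQuotient p (r-1) u
      ∧ eulerQuotient p (r-1) u ≤ p ^ (r-1) - 1 := by
  unfold classC1 levelSetD
  simp only [Finset.mem_biUnion, Finset.mem_Icc, Finset.mem_filter, Finset.mem_range]
  constructor
  · rintro ⟨l, ⟨h1, h2⟩, -, -, hQ⟩
    omega
  · rintro ⟨h1, h2⟩
    exact ⟨_, ⟨h1, h2⟩, hu, hcop, rfl⟩

lemma main_aux (p : ℕ) (hp : p.Prime) (hodd : Odd p) (s : ℕ) (hs : 2 ≤ s)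
    (v : ℕ) (hv : v < p ^ s) (hvp : v.Coprime p) (i j : ℕ) (hi : i < p)
    (hj : j ≤ (p ^ (s-1) - 1)/2) (hQ : eulerQuotient p s v = j + i * p ^ (s-1)) :
    (((Finset.range p).image (fun k => v + k * p ^ s)) ∩ classC0 p (s+1)).card = (p+1)/2 ∧
    (((Finset.range p).image (fun k => v + k * p ^ s)) ∩ classC1 p (s+1)).card = (p-1)/2 := by
  have hpodd : p % 2 = 1 := Nat.odd_iff.mp hodd
  have hp3 : 3 ≤ p := by have := hp.two_le; omega
  obtain ⟨a, ha⟩ : ∃ a, p = 2*a+1 := ⟨p/2, by omega⟩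
  obtain ⟨b, hb⟩ : ∃ b, p ^ (s-1) = 2*b+1 :=
    ⟨p^(s-1)/2, by have := Nat.odd_iff.mp (hodd.pow (n := s-1)); omega⟩
  have ha1 : 1 ≤ a := by omega
  have hb1 : 1 ≤ b := by
    have h1 : p ≤ p ^ (s-1) := by
      calc p = p ^ 1 := (pow_one p).symm
      _ ≤ p ^ (s-1) := Nat.pow_le_pow_right hp.pos (by omega)
    omega
  have hpp : p ^ s = p ^ (s-1) * p := by
    conv_lhs => rw [show s = (s-1)+1 by omega]
    rw [pow_succ]
  have hps4 : p ^ s = 4*(a*b) + 2*a + 2*b + 1 := by rw [hpp, hb, ha]; ring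
  have hjb : j ≤ b := by omega
  have hppos : 0 < p ^ s := Nat.pow_pos hp.pos
  set c := (p - 1) * v ^ (p ^ (s - 1) * (p - 1) - 1) with hc_def
  have hccop : Nat.Coprime c p := by
    have h1 : Nat.Coprime (p-1) p := by
      have hnd : ¬ p ∣ (p - 1) := by
        intro h
        have := Nat.le_of_dvd (by omega) h
        omega
      exact Nat.coprime_comm.mp ((Nat.Prime.coprime_iff_not_dvd hp).mpr hnd)
    exact h1.mul (Nat.Coprime.pow_left _ hvp)
  set t : ℕ → ℕ := fun k => (i + k * c) % p with ht_def
  have htlt : ∀ k, t k < p := fun k => Nat.mod_lt _ hp.pos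
  have hQfk : ∀ k, eulerQuotient p s (v + k * p ^ s) = j + t k * p ^ (s-1) := by
    intro k
    rw [eulerQuotient_add p hp s (by omega) v hvp k, hQ, ← hc_def]
    have h1 : j + i * p ^ (s-1) + k * c * p ^ (s-1) = j + (i + k * c) * p ^ (s-1) := by ring
    rw [h1, hpp]
    exact mod_decomp p (s-1) j (i + k*c) hp.pos (by omega)
  -- membership characterizations
  have hult : ∀ k, k < p → v + k * p ^ s < p ^ (s+1) := by
    intro k hk
    rw [pow_succ]
    have h1 : k * p ^ s ≤ (p-1) * p ^ s := Nat.mul_le_mul_right _ (by omega)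
    have h2 : (p-1) * p ^ s + p ^ s = p ^ s * p := by
      have hh : p - 1 + 1 = p := by omega
      calc (p-1) * p^s + p^s = (p - 1 + 1) * p ^ s := by ring
      _ = p ^ s * p := by rw [hh]; ring
    omega
  have hucop : ∀ k, Nat.Coprime (v + k * p ^ s) p := by
    intro k
    have h1 : v + k * p ^ s = v + (k * p ^ (s-1)) * p := by rw [hpp]; ring
    rw [h1, Nat.coprime_add_mul_right_left]
    exact hvp
  have hC0 : ∀ k, k < p → (v + k * p ^ s ∈ classC0 p (s+1) ↔ t k ≤ a) := by
    intro k hk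
    rw [mem_C0_iff p (s+1) hp.one_lt _ (hult k hk) (hucop k)]
    simp only [Nat.add_sub_cancel]
    rw [hQfk k, hb]
    have htk := htlt k
    have hhalf : (p ^ s - 1) / 2 = 2*(a*b) + a + b := by omega
    rw [hhalf]
    have e1 : (a+1) * (2*b+1) = 2*(a*b)+a+2*b+1 := by ring
    have e2 : a * (2*b+1) = 2*(a*b)+a := by ring
    constructor
    · intro h
      by_contra h'
      push_neg at h'
      have h2 : (a+1) * (2*b+1) ≤ t k * (2*b+1) := Nat.mul_le_mul_right _ h'
      omega
    · intro h
      have h2 : t k * (2*b+1) ≤ a * (2*b+1) := Nat.mul_le_mul_right _ h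
      omega
  have hC1 : ∀ k, k < p → (v + k * p ^ s ∈ classC1 p (s+1) ↔ a + 1 ≤ t k) := by
    intro k hk
    rw [mem_C1_iff p (s+1) _ (hult k hk) (hucop k)]
    simp only [Nat.add_sub_cancel]
    rw [hQfk k, hb]
    have htk := htlt k
    have hhalf : (p ^ s + 1) / 2 = 2*(a*b) + a + b + 1 := by omega
    rw [hhalf]
    have e1 : (a+1) * (2*b+1) = 2*(a*b)+a+2*b+1 := by ring
    have e2 : a * (2*b+1) = 2*(a*b)+a := by ring
    have e3 : (2*a) * (2*b+1) = 4*(a*b)+2*a := by ring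
    constructor
    · rintro ⟨h1, -⟩
      by_contra h'
      push_neg at h'
      have h2 : t k * (2*b+1) ≤ a * (2*b+1) := Nat.mul_le_mul_right _ (by omega)
      omega
    · intro h
      have h2 : (a+1) * (2*b+1) ≤ t k * (2*b+1) := Nat.mul_le_mul_right _ h
      have h3 : t k * (2*b+1) ≤ (2*a) * (2*b+1) := Nat.mul_le_mul_right _ (by omega)
      omega
  -- f injective
  have hfinj : Function.Injective (fun k => v + k * p ^ s) := by
    intro k1 k2 h
    simp only at h
    have : k1 * p ^ s = k2 * p ^ s := by omega
    exact Nat.eq_of_mul_eq_mul_right hppos this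
  -- t injective on range p
  have htinj : ∀ k1, k1 < p → ∀ k2, k2 < p → t k1 = t k2 → k1 = k2 := by
    intro k1 h1 k2 h2 h
    have hmod : i + k1 * c ≡ i + k2 * c [MOD p] := h
    have h3 : k1 * c ≡ k2 * c [MOD p] := Nat.ModEq.add_left_cancel' i hmod
    have h4 : k1 ≡ k2 [MOD p] := Nat.ModEq.cancel_right_of_coprime (Nat.coprime_comm.mp hccop) h3
    have h5 : k1 % p = k2 % p := h4
    rw [Nat.mod_eq_of_lt h1, Nat.mod_eq_of_lt h2] at h5
    exact h5
  -- t surjective onto range p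
  have htsurj : ∀ T, T < p → ∃ k, k < p ∧ t k = T := by
    have hsur := Finset.surj_on_of_inj_on_of_card_le
      (s := Finset.range p) (t := Finset.range p) (fun k _ => t k)
      (fun k _ => Finset.mem_range.mpr (htlt k))
      (fun k1 k2 hk1 hk2 h =>
        htinj k1 (Finset.mem_range.mp hk1) k2 (Finset.mem_range.mp hk2) h)
      le_rfl
    intro T hT
    obtain ⟨k, hk, hkT⟩ := hsur T (Finset.mem_range.mpr hT)
    exact ⟨k, Finset.mem_range.mp hk, hkT.symm⟩
  -- counting
  have hcard0 : ((Finset.range p).filter (fun k => t k ≤ a)).card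
      = ((Finset.range p).filter (fun T => T ≤ a)).card := by
    apply Finset.card_bij (fun k _ => t k)
    · intro k hk
      simp only [Finset.mem_filter, Finset.mem_range] at hk ⊢
      exact ⟨htlt k, hk.2⟩
    · intro k1 hk1 k2 hk2 h
      simp only [Finset.mem_filter, Finset.mem_range] at hk1 hk2
      exact htinj k1 hk1.1 k2 hk2.1 h
    · intro T hT
      simp only [Finset.mem_filter, Finset.mem_range] at hT
      obtain ⟨k, hk, hkT⟩ := htsurj T hT.1
      exact ⟨k, Finset.mem_filter.mpr ⟨Finset.mem_range.mpr hk, by rw [hkT]; exact hT.2⟩, hkT⟩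
  have hcard1 : ((Finset.range p).filter (fun k => a + 1 ≤ t k)).card
      = ((Finset.range p).filter (fun T => a + 1 ≤ T)).card := by
    apply Finset.card_bij (fun k _ => t k)
    · intro k hk
      simp only [Finset.mem_filter, Finset.mem_range] at hk ⊢
      exact ⟨htlt k, hk.2⟩
    · intro k1 hk1 k2 hk2 h
      simp only [Finset.mem_filter, Finset.mem_range] at hk1 hk2
      exact htinj k1 hk1.1 k2 hk2.1 h
    · intro T hT
      simp only [Finset.mem_filter, Finset.mem_range] at hT
      obtain ⟨k, hk, hkT⟩ := htsurj T hT.1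
      exact ⟨k, Finset.mem_filter.mpr ⟨Finset.mem_range.mpr hk, by rw [hkT]; exact hT.2⟩, hkT⟩
  have hinter : ∀ (C : Finset ℕ),
      (Finset.range p).image (fun k => v + k * p ^ s) ∩ C
        = ((Finset.range p).filter (fun k => v + k * p ^ s ∈ C)).image
            (fun k => v + k * p ^ s) := by
    intro C
    rw [← Finset.filter_mem_eq_inter, Finset.filter_image]
  constructor
  · rw [hinter, Finset.card_image_of_injective _ hfinj]
    have heq : (Finset.range p).filter (fun k => v + k * p ^ s ∈ classC0 p (s+1))
        = (Finset.range p).filter (fun k => t k ≤ a) := by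
      apply Finset.filter_congr
      intro k hk
      simp only [Finset.mem_range] at hk
      simp only [hC0 k hk]
    rw [heq, hcard0]
    have heq2 : (Finset.range p).filter (fun T => T ≤ a) = Finset.range (a+1) := by
      ext x
      simp only [Finset.mem_filter, Finset.mem_range]
      omega
    rw [heq2, Finset.card_range]
    omega
  · rw [hinter, Finset.card_image_of_injective _ hfinj]
    have heq : (Finset.range p).filter (fun k => v + k * p ^ s ∈ classC1 p (s+1))
        = (Finset.range p).filter (fun k => a + 1 ≤ t k) := by
      apply Finset.filter_congr
      intro k hk
      simp only [Finset.mem_range] at hk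
      simp only [hC1 k hk]
    rw [heq, hcard1]
    have heq2 : (Finset.range p).filter (fun T => a + 1 ≤ T) = Finset.Ico (a+1) p := by
      ext x
      simp only [Finset.mem_filter, Finset.mem_range, Finset.mem_Ico]
      omega
    rw [heq2, Nat.card_Ico]
    omega

theorem fiber_inter_classes_card_low (p : ℕ) (hp : p.Prime) (hodd : Odd p)
    (r : ℕ) (hr : 3 ≤ r) (v : ℕ) (hv : v < p ^ (r - 1)) (hvp : Nat.Coprime v p)
    (i j : ℕ) (hi : i < p) (hj : j ≤ (p ^ (r - 2) - 1) / 2)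
    (hQ : eulerQuotient p (r - 1) v = j + i * p ^ (r - 2)) :
    (fiberSet p r v ∩ classC0 p r).card = (p + 1) / 2 ∧
    (fiberSet p r v ∩ classC1 p r).card = (p - 1) / 2 := by
  obtain ⟨s, rfl⟩ : ∃ s, r = s + 1 := ⟨r - 1, by omega⟩
  have hs : 2 ≤ s := by omega
  have h1 : s + 1 - 1 = s := by omega
  have h2 : s + 1 - 2 = s - 1 := by omega
  rw [h1] at hv
  rw [h2] at hj
  rw [h1, h2] at hQ
  have hfib : fiberSet p (s+1) v = (Finset.range p).image (fun k => v + k * p ^ s) := by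
    unfold fiberSet
    rw [h1]
  rw [hfib]
  exact main_aux p hp hodd s hs v hv hvp i j hi hj hQ
end

section
/- Let p be an odd prime and r ≥ 3. In F_2[X], let S^{(p^r)}(X) = Σ_{l=(p^{r−1}+1)/2}^{p^{r−1}−1} d_l^{(p^r)}(X) and S̄^{(p^{r−1})}(X), S^{(p^{r−1})}(X) defined analogously one level down. Then S^{(p^r)}(X) ≡ S^{(p^{r−1})}(X) (mod X^{p^{r−1}}−1) if p ≡ 1 (mod 4), and S^{(p^r)}(X) ≡ S̄^{(p^{r−1})}(X) (mod X^{p^{r−1}}−1) if p ≡ 3 (mod 4). -/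
open Polynomial

/-- `d_l^{(p^r)}(X) = Σ_{n ∈ D_l^{(p^r)}} X^n ∈ F_2[X]`. -/
noncomputable def dPoly (p r l : ℕ) : Polynomial (ZMod 2) :=
  ∑ n ∈ levelSetD p r l, X ^ n

/-- `S^{(p^r)}(X) = Σ_{l=(p^{r-1}+1)/2}^{p^{r-1}-1} d_l^{(p^r)}(X)`. -/
noncomputable def SPoly (p r : ℕ) : Polynomial (ZMod 2) :=
  ∑ l ∈ Finset.Icc ((p ^ (r - 1) + 1) / 2) (p ^ (r - 1) - 1), dPoly p r l

/-- `S̄^{(p^r)}(X) = Σ_{l=0}^{(p^{r-1}-1)/2} d_l^{(p^r)}(X)`. -/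
noncomputable def SbarPoly (p r : ℕ) : Polynomial (ZMod 2) :=
  ∑ l ∈ Finset.range ((p ^ (r - 1) - 1) / 2 + 1), dPoly p r l


namespace EQAux

/-- exponent φ(p^w) -/
def eul (p w : ℕ) : ℕ := p ^ (w-1) * (p-1)

/-- integer Euler quotient before reduction -/
def Fq (p w u : ℕ) : ℕ := (u ^ eul p w - 1) / p ^ w

variable {p w u : ℕ}

lemma u_pos (hp : p.Prime) (hu : u.Coprime p) : 0 < u := by
  rcases Nat.eq_zero_or_pos u with h | h
  · subst h
    rw [Nat.coprime_zero_left] at hu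
    exact absurd hu hp.one_lt.ne'
  · exact h

lemma eul_pos (hp : p.Prime) : 0 < eul p w := by
  have := hp.two_le
  exact Nat.mul_pos (Nat.pow_pos (by omega)) (by omega)

lemma pow_dvd_sub_one (hp : p.Prime) (hw : 1 ≤ w) (hu : u.Coprime p) :
    p ^ w ∣ u ^ eul p w - 1 := by
  have hc : u.Coprime (p ^ w) := hu.pow_right w
  have h := Nat.ModEq.pow_totient hc
  rw [Nat.totient_prime_pow hp (by omega)] at h
  have h1 : 1  ≤ u ^ eul p w := Nat.one_le_pow _ _ (u_pos hp hu)
  exact (Nat.modEq_iff_dvd' h1).mp h.symm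

lemma Fq_spec (hp : p.Prime) (hw : 1 ≤ w) (hu : u.Coprime p) :
    u ^ eul p w = 1 + p ^ w * Fq p w u := by
  have hd := pow_dvd_sub_one hp hw hu
  have h1 : 1 ≤ u ^ eul p w := Nat.one_le_pow _ _ (u_pos hp hu)
  have := Nat.mul_div_cancel' hd
  unfold Fq
  omega

lemma coprime_shift (hp : p.Prime) (hw : 1 ≤ w) (hu : u.Coprime p) (k : ℕ) :
    (u + k * p ^ w).Coprime p := by
  rw [Nat.coprime_comm, hp.coprime_iff_not_dvd] at hu ⊢
  intro h
  apply hu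
  have hdk : p ∣ k * p ^ w := Dvd.dvd.mul_left (dvd_pow_self p (by omega)) k
  exact (Nat.dvd_add_right hdk).mp (by rwa [add_comm] at h)

/-- Key shift congruence for the pre-quotient. -/
lemma Fq_shift (hp : p.Prime) (hw : 1 ≤ w) (hu : u.Coprime p) (k : ℕ) :
    Fq p w (u + k * p ^ w) ≡ Fq p w u + eul p w * u ^ (eul p w - 1) * k [MOD p ^ w] := by
  set e := eul p w with he
  set P := p ^ w with hP
  have hepos : 0 < e := eul_pos hp
  have hPpos : 0 < P := Nat.pow_pos hp.pos
  -- binomial expansion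
  have hbin : (u + k * P) ^ e = ∑ i ∈ Finset.range (e + 1), u ^ i * (k*P) ^ (e - i) * e.choose i :=
    add_pow u (k*P) e
  have hsplit : (u + k*P) ^ e =
      (∑ i ∈ Finset.range (e - 1), u ^ i * (k*P) ^ (e - i) * e.choose i)
      + u ^ (e-1) * (k*P) * e + u ^ e := by
    rw [hbin]
    have h1 : e + 1 = (e - 1) + 1 + 1 := by omega
    rw [h1, Finset.sum_range_succ, Finset.sum_range_succ]
    have h2 : e - 1 + 1 = e := by omega
    rw [h2]
    have h3 : e - (e - 1) = 1 := by omega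
    rw [h3, Nat.sub_self, Nat.choose_self, pow_zero, pow_one]
    have h4 : e.choose (e - 1) = e := by
      rw [← Nat.choose_symm (by omega : e - 1 ≤ e), h3, Nat.choose_one_right]
    rw [h4]
    ring
  have hdvdS : P * P ∣ ∑ i ∈ Finset.range (e - 1), u ^ i * (k*P) ^ (e - i) * e.choose i := by
    apply Finset.dvd_sum
    intro i hi
    rw [Finset.mem_range] at hi
    have h2 : 2 ≤ e - i := by omega
    have : P * P ∣ (k*P) ^ (e - i) := by
      have : (k*P)^(e-i) = (k*P)^(e-i-2) * ((k*P)*(k*P)) := by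
        rw [← pow_two, ← pow_add]; congr 1; omega
      rw [this]
      exact Dvd.dvd.mul_left (mul_dvd_mul (dvd_mul_left P k) (dvd_mul_left P k)) _
    exact Dvd.dvd.mul_right (Dvd.dvd.mul_left this _) _
  have hmod : (u + k*P) ^ e ≡ u ^ (e-1) * (k*P) * e + u ^ e [MOD P * P] := by
    calc (u + k*P) ^ e
        = (∑ i ∈ Finset.range (e - 1), u ^ i * (k*P) ^ (e - i) * e.choose i)
          + (u ^ (e-1) * (k*P) * e + u ^ e) := by rw [hsplit]; ring
      _ ≡ 0 + (u ^ (e-1) * (k*P) * e + u ^ e) [MOD P * P] :=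
          (hdvdS.modEq_zero_nat).add_right _
      _ = u ^ (e-1) * (k*P) * e + u ^ e := by ring
  have hcs : (u + k * P).Coprime p := coprime_shift hp hw hu k
  have hspec1 : u ^ e = 1 + P * Fq p w u := Fq_spec hp hw hu
  have hspec2 : (u + k*P) ^ e = 1 + P * Fq p w (u + k*P) := Fq_spec hp hw hcs
  rw [hspec1, hspec2] at hmod
  have hr : u ^ (e-1) * (k*P) * e + (1 + P * Fq p w u)
      = 1 + P * (Fq p w u + e * u ^ (e-1) * k) := by ring
  rw [hr] at hmod
  have := Nat.ModEq.add_left_cancel' 1 hmod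
  exact Nat.ModEq.mul_left_cancel' hPpos.ne' this

/-- descent: `Fq` at level `w` reduces to level `w-1` modulo `p^(w-1)`. -/
lemma Fq_descent (hp : p.Prime) (hodd : Odd p) (hw : 2 ≤ w) (hu : u.Coprime p) :
    Fq p w u ≡ Fq p (w-1) u [MOD p ^ (w-1)] := by
  set c := Fq p (w-1) u with hc
  have hw1 : 1 ≤ w - 1 := by omega
  have hspec : u ^ eul p (w-1) = 1 + p ^ (w-1) * c := Fq_spec hp hw1 hu
  have hee : eul p w = eul p (w-1) * p := by
    unfold eul
    have h1 : p ^ (w - 1) = p ^ (w - 1 - 1) * p := by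
      rw [← pow_succ]; congr 1; omega
    rw [h1]; ring
  have hup : u ^ eul p w = (1 + p ^ (w-1) * c) ^ p := by
    rw [hee, pow_mul, hspec]
  set x := p ^ (w-1) * c with hx
  have hbin : (x + 1) ^ p = ∑ i ∈ Finset.range (p + 1), x ^ i * (1:ℕ) ^ (p - i) * p.choose i :=
    add_pow x 1 p
  simp only [one_pow, mul_one] at hbin
  have hp3 : 3 ≤ p := by
    have h2 := hp.two_le
    rcases hodd with ⟨t, ht⟩
    omega
  have hsplit : (x + 1) ^ p
      = 1 + x * p + ∑ i ∈ Finset.range (p - 1), x ^ (i+1+1) * p.choose (i+1+1) := by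
    rw [hbin]
    have h1 : p + 1 = (p - 1) + 1 + 1 := by omega
    rw [h1, Finset.sum_range_succ', Finset.sum_range_succ']
    simp only [zero_add, pow_zero, pow_one, Nat.choose_zero_right, Nat.choose_one_right,
      one_mul, mul_one]
    ring
  have hdvdS : p ^ (2*w - 1) ∣ ∑ i ∈ Finset.range (p - 1), x ^ (i+1+1) * p.choose (i+1+1) := by
    apply Finset.dvd_sum
    intro i hi
    rw [Finset.mem_range] at hi
    set j := i + 1 + 1 with hj
    have hj2 : 2 ≤ j := by omega
    have hjp : j ≤ p := by omega
    have hxj : p ^ ((w-1)*j) ∣ x ^ j := by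
      rw [hx, mul_pow, ← pow_mul]; exact dvd_mul_right _ _
    rcases Nat.lt_or_ge j p with hlt | hge
    · have hch : p ∣ p.choose j := hp.dvd_choose_self (by omega) hlt
      have hle : 2*w - 2 ≤ (w-1)*j := by
        have := Nat.mul_le_mul_left (w-1) hj2
        omega
      have h1 : p ^ (2*w - 2) ∣ x ^ j :=
        dvd_trans (pow_dvd_pow p hle) hxj
      have : p ^ (2*w - 2) * p ∣ x ^ j * p.choose j := mul_dvd_mul h1 hch
      have he : p ^ (2*w - 1) = p ^ (2*w - 2) * p := by
        rw [← pow_succ]; congr 1; omega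
      rw [he]; exact this
    · have hjep : j = p := le_antisymm hjp hge
      have h1 : 2*w - 1 ≤ (w-1)*j := by
        have h3 : (w-1)*3 ≤ (w-1)*j := Nat.mul_le_mul_left (w-1) (by omega)
        omega
      exact dvd_mul_of_dvd_left (dvd_trans (pow_dvd_pow p h1) hxj) _
  have hcong : u ^ eul p w ≡ 1 + p ^ w * c [MOD p ^ (2*w - 1)] := by
    have h0 : u ^ eul p w = 1 + x * p + ∑ i ∈ Finset.range (p - 1), x ^ (i+1+1) * p.choose (i+1+1) := by
      rw [hup, add_comm (1:ℕ) x, hsplit]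
    have h1 : (1:ℕ) + x * p = 1 + p ^ w * c := by
      rw [hx]
      have : p ^ (w-1) * p = p ^ w := by rw [← pow_succ]; congr 1; omega
      rw [← this]; ring
    calc u ^ eul p w = (1 + p ^ w * c) + ∑ i ∈ Finset.range (p - 1), x ^ (i+1+1) * p.choose (i+1+1) := by
            rw [h0, h1]
      _ ≡ (1 + p ^ w * c) + 0 [MOD p ^ (2*w-1)] := Nat.ModEq.add_left _ hdvdS.modEq_zero_nat
      _ = 1 + p ^ w * c := by ring
  have hspecw : u ^ eul p w = 1 + p ^ w * Fq p w u := Fq_spec hp (by omega) hu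
  rw [hspecw] at hcong
  have hsplitmod : p ^ (2*w - 1) = p ^ w * p ^ (w - 1) := by
    rw [← pow_add]; congr 1; omega
  rw [hsplitmod] at hcong
  have := Nat.ModEq.add_left_cancel' 1 hcong
  exact Nat.ModEq.mul_left_cancel' (Nat.pow_pos (n := w) hp.pos).ne' this


lemma eulerQuotient_eq_Fq (p w x : ℕ) : eulerQuotient p w x = Fq p w x % p ^ w := rfl

/-- interval arithmetic for the half-interval count -/
lemma interval_iff {p m' q : ℕ} (jj : ℕ) (hp3 : 3 ≤ p) (hpodd : p % 2 = 1)
    (hm' : m' % 2 = 1) (hq : q < m') :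
    ((m' * p + 1)/2 ≤ jj * m' + q) ↔ ((if q ≤ (m'-1)/2 then (p+1)/2 else (p-1)/2) ≤ jj) := by
  obtain ⟨c, hcp⟩ : ∃ c, p = 2*c+1 := ⟨p/2, by omega⟩
  obtain ⟨d, hdm⟩ : ∃ d, m' = 2*d+1 := ⟨m'/2, by omega⟩
  subst hcp hdm
  have hT : ((2*d+1) * (2*c+1) + 1)/2 = 2*(c*d)+c+d+1 := by
    have h : (2*d+1) * (2*c+1) + 1 = 2*(2*(c*d)+c+d+1) := by ring
    omega
  have h1 : (2*c+1+1)/2 = c+1 := by omega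
  have h2 : (2*c+1-1)/2 = c := by omega
  have h3 : (2*d+1-1)/2 = d := by omega
  rw [hT, h1, h2, h3]
  split_ifs with hqd
  · constructor
    · intro h
      by_contra hcon
      push_neg at hcon
      have hmul : jj * (2*d+1) ≤ c * (2*d+1) := Nat.mul_le_mul_right _ (by omega)
      have he : c * (2*d+1) = 2*(c*d) + c := by ring
      linarith
    · intro h
      have hmul : (c+1) * (2*d+1) ≤ jj * (2*d+1) := Nat.mul_le_mul_right _ h
      have he : (c+1)*(2*d+1) = 2*(c*d)+c+2*d+1 := by ring
      linarith
  · push_neg at hqd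
    constructor
    · intro h
      by_contra hcon
      push_neg at hcon
      have hmul : jj * (2*d+1) ≤ (c-1) * (2*d+1) := Nat.mul_le_mul_right _ (by omega)
      have he : c * (2*d+1) = 2*(c*d) + c := by ring
      rcases Nat.eq_zero_or_pos c with hc0 | hc0
      · subst hc0; simp at hmul ⊢; linarith
      · have he2 : (c-1) * (2*d+1) + (2*d+1) = c * (2*d+1) := by
          have : c - 1 + 1 = c := by omega
          calc (c-1) * (2*d+1) + (2*d+1) = (c-1+1) * (2*d+1) := by ring
            _ = c * (2*d+1) := by rw [this]
        linarith
    · intro h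
      have hmul : c * (2*d+1) ≤ jj * (2*d+1) := Nat.mul_le_mul_right _ h
      have he : c * (2*d+1) = 2*(c*d) + c := by ring
      linarith

/-- The central counting lemma. -/
lemma count_key {p : ℕ} (hp : p.Prime) (hodd : Odd p) {s : ℕ} (hs : 2 ≤ s)
    {v : ℕ} (hv : v.Coprime p) :
    ((Finset.range p).filter (fun k =>
        eulerQuotient p s (v + k * p ^ s) ∈ Finset.Icc ((p ^ s + 1)/2) (p ^ s - 1))).card
      = if eulerQuotient p (s-1) v ≤ (p ^ (s-1) - 1)/2 then (p-1)/2 else (p+1)/2 := by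
  have hp3 : 3 ≤ p := by
    have := hp.two_le; rcases hodd with ⟨t, ht⟩; omega
  have hpodd : p % 2 = 1 := by rcases hodd with ⟨t, ht⟩; omega
  set m' := p ^ (s-1) with hm'
  set m := p ^ s with hm
  have hmm : m = m' * p := by
    rw [hm, hm', ← pow_succ]; congr 1; omega
  have hm'pos : 0 < m' := Nat.pow_pos hp.pos
  have hmpos : 0 < m := Nat.pow_pos hp.pos
  have hm'odd : m' % 2 = 1 := Nat.odd_iff.mp (hodd.pow)
  set q := eulerQuotient p (s-1) v with hq
  have hqlt : q < m' := by
    rw [hq, eulerQuotient_eq_Fq]; exact Nat.mod_lt _ hm'pos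
  set E := eul p s * v ^ (eul p s - 1) with hE
  set val : ℕ → ℕ := fun k => (Fq p s v + E * k) % m with hval
  have hvallt : ∀ k, val k < m := fun k => Nat.mod_lt _ hmpos
  have h5 : ∀ k, eulerQuotient p s (v + k * p ^ s) = val k := by
    intro k
    rw [eulerQuotient_eq_Fq]
    exact Fq_shift hp (by omega) hv k
  have hm'dvdE : m' ∣ E := by
    rw [hE, hm']
    exact Dvd.dvd.mul_right (dvd_mul_right _ _) _
  have hqmod : ∀ k, val k % m' = q := by
    intro k
    obtain ⟨t, ht⟩ := hm'dvdE.mul_right k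
    have hdm : m' ∣ m := ⟨p, hmm⟩
    rw [hval]
    simp only
    rw [Nat.mod_mod_of_dvd _ hdm, ht, Nat.add_mul_mod_self_left]
    have hdes : Fq p s v % m' = Fq p (s-1) v % m' := Fq_descent hp hodd hs hv
    rw [hdes, hq, eulerQuotient_eq_Fq, ← hm']
  set j : ℕ → ℕ := fun k => val k / m' with hj
  have hvaleq : ∀ k, val k = j k * m' + q := by
    intro k
    conv_lhs => rw [← Nat.div_add_mod (val k) m']
    rw [hqmod k]
    simp only [hj]
    ring
  have hjlt : ∀ k, j k < p := by
    intro k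
    have h := hvallt k
    rw [hmm] at h
    simp only [hj]
    rw [Nat.div_lt_iff_lt_mul hm'pos]
    rw [mul_comm] at h
    exact h
  have hinj : Set.InjOn j (Finset.range p : Set ℕ) := by
    intro k hk k' hk' hjj
    simp only [Finset.coe_range, Set.mem_Iio] at hk hk'
    have hveq : val k = val k' := by rw [hvaleq k, hvaleq k', hjj]
    have hmeq : Fq p s v + E * k ≡ Fq p s v + E * k' [MOD m] := hveq
    have h2 := Nat.ModEq.add_left_cancel' (Fq p s v) hmeq
    have hEe : E = m' * ((p-1) * v ^ (eul p s - 1)) := by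
      rw [hE, hm']; unfold eul; ring
    have h3 : m' * ((p-1) * v ^ (eul p s - 1) * k)
        ≡ m' * ((p-1) * v ^ (eul p s - 1) * k') [MOD m' * p] := by
      have e1 : E * k = m' * ((p-1) * v ^ (eul p s - 1) * k) := by rw [hEe]; ring
      have e2 : E * k' = m' * ((p-1) * v ^ (eul p s - 1) * k') := by rw [hEe]; ring
      rw [e1, e2, hmm] at h2
      exact h2
    have h4 := Nat.ModEq.mul_left_cancel' hm'pos.ne' h3
    have hcop : Nat.gcd p ((p-1) * v ^ (eul p s - 1)) = 1 := by
      apply Nat.Coprime.mul_right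
      · rw [hp.coprime_iff_not_dvd]
        intro hd
        have := Nat.le_of_dvd (by omega) hd
        omega
      · exact (hv.symm).pow_right _
    have h6 := Nat.ModEq.cancel_left_of_coprime hcop h4
    exact Nat.ModEq.eq_of_lt_of_lt h6 hk hk'
  have himage : (Finset.range p).image j = Finset.range p := by
    apply Finset.eq_of_subset_of_card_le
    · intro x hx
      rw [Finset.mem_image] at hx
      obtain ⟨k, hk, rfl⟩ := hx
      exact Finset.mem_range.mpr (hjlt k)
    · rw [Finset.card_image_of_injOn hinj, Finset.card_range]
  set j0 := if q ≤ (m'-1)/2 then (p+1)/2 else (p-1)/2 with hj0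
  have hcond : ∀ k, (eulerQuotient p s (v + k * p ^ s)
      ∈ Finset.Icc ((p^s+1)/2) (p^s-1)) ↔ j0 ≤ j k := by
    intro k
    rw [h5 k, Finset.mem_Icc]
    have hub : val k ≤ p ^ s - 1 := by
      have h := hvallt k
      rw [← hm]
      omega
    have hmain : ((p^s+1)/2 ≤ val k) ↔ j0 ≤ j k := by
      rw [hvaleq k, ← hm, hmm]
      exact interval_iff (j k) hp3 hpodd hm'odd hqlt
    exact ⟨fun h => hmain.mp h.1, fun h => ⟨hmain.mpr h, hub⟩⟩
  have hcard : ((Finset.range p).filter (fun k =>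
      eulerQuotient p s (v + k * p ^ s) ∈ Finset.Icc ((p ^ s + 1)/2) (p ^ s - 1))).card
      = p - j0 := by
    have hfe : (Finset.range p).filter (fun k =>
        eulerQuotient p s (v + k * p ^ s) ∈ Finset.Icc ((p ^ s + 1)/2) (p ^ s - 1))
        = (Finset.range p).filter (fun k => j0 ≤ j k) := by
      apply Finset.filter_congr
      intro k _
      simp only [hcond k]
    rw [hfe]
    have hinj' : Set.InjOn j (((Finset.range p).filter (fun k => j0 ≤ j k)) : Set ℕ) := by
      apply hinj.mono
      intro x hx
      simp only [Finset.coe_filter, Set.mem_setOf_eq] at hx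
      simp only [Finset.coe_range]
      rw [Finset.mem_range] at hx
      exact Set.mem_Iio.mpr hx.1
    rw [← Finset.card_image_of_injOn hinj', ← Finset.filter_image, himage]
    have : (Finset.range p).filter (fun x => j0 ≤ x) = Finset.Ico j0 p := by
      ext x
      simp only [Finset.mem_filter, Finset.mem_range, Finset.mem_Ico]
      omega
    rw [this, Nat.card_Ico]
  rw [hcard, hj0]
  split_ifs with h
  · omega
  · omega


lemma sum_range_mul_decomp {M : Type*} [AddCommMonoid M] (f : ℕ → M) (a b : ℕ) :
    ∑ u ∈ Finset.range (b * a), f u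
      = ∑ x ∈ Finset.range b ×ˢ Finset.range a, f (x.1 + x.2 * b) := by
  apply Finset.sum_nbij' (i := fun u => (u % b, u / b)) (j := fun x => x.1 + x.2 * b)
  · intro u hu
    rw [Finset.mem_range] at hu
    have hb : 0 < b := by
      rcases Nat.eq_zero_or_pos b with h | h
      · subst h; omega
      · exact h
    rw [Finset.mem_product, Finset.mem_range, Finset.mem_range]
    constructor
    · exact Nat.mod_lt _ hb
    · rw [Nat.div_lt_iff_lt_mul hb, mul_comm]; exact hu
  · intro x hx
    rw [Finset.mem_product, Finset.mem_range, Finset.mem_range] at hx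
    rw [Finset.mem_range]
    have h1 : x.2 + 1 ≤ a := hx.2
    have h2 : (x.2 + 1) * b ≤ a * b := Nat.mul_le_mul_right b h1
    have h3 : x.1 + x.2 * b < (x.2 + 1) * b := by
      have h : (x.2 + 1) * b = x.2 * b + b := by ring
      omega
    calc x.1 + x.2 * b < (x.2 + 1) * b := h3
      _ ≤ a * b := h2
      _ = b * a := Nat.mul_comm a b
  · intro u _
    exact Nat.mod_add_div' u b
  · intro x hx
    rw [Finset.mem_product, Finset.mem_range, Finset.mem_range] at hx
    have h1 : (x.1 + x.2 * b) % b = x.1 := by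
      rw [Nat.add_mul_mod_self_right, Nat.mod_eq_of_lt hx.1]
    have h2 : (x.1 + x.2 * b) / b = x.2 := by
      rw [Nat.add_mul_div_right _ _ (by omega : 0 < b), Nat.div_eq_of_lt hx.1, zero_add]
    rw [h1, h2]
  · intro u _
    rw [Nat.mod_add_div' u b]

lemma sum_dPoly_eq (p r : ℕ) (L : Finset ℕ) :
    ∑ l ∈ L, dPoly p r l = ∑ u ∈ Finset.range (p^r),
      (if Nat.Coprime u p ∧ eulerQuotient p (r-1) u ∈ L then (X : Polynomial (ZMod 2))^u
       else 0) := by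
  calc ∑ l ∈ L, dPoly p r l
      = ∑ l ∈ L, ∑ u ∈ Finset.range (p^r),
          (if Nat.Coprime u p ∧ eulerQuotient p (r-1) u = l then (X : Polynomial (ZMod 2))^u
           else 0) := by
        apply Finset.sum_congr rfl
        intro l _
        unfold dPoly levelSetD
        rw [Finset.sum_filter]
    _ = ∑ u ∈ Finset.range (p^r), ∑ l ∈ L,
          (if Nat.Coprime u p ∧ eulerQuotient p (r-1) u = l then (X : Polynomial (ZMod 2))^u
           else 0) := Finset.sum_comm
    _ = _ := by
        apply Finset.sum_congr rfl
        intro u _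
        have hsplit : ∀ l, (if Nat.Coprime u p ∧ eulerQuotient p (r-1) u = l
              then (X : Polynomial (ZMod 2))^u else 0)
            = if Nat.Coprime u p then (if eulerQuotient p (r-1) u = l
                then (X : Polynomial (ZMod 2))^u else 0) else 0 := by
          intro l
          split_ifs <;> first | rfl | tauto
        simp only [hsplit]
        by_cases hC : Nat.Coprime u p
        · simp only [eq_true hC, if_true, true_and]
          exact Finset.sum_ite_eq L (eulerQuotient p (r-1) u) (fun _ => (X : Polynomial (ZMod 2))^u)
        · simp only [eq_false hC, if_false, false_and]
          exact Finset.sum_const_zero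

lemma coprime_add_mul_pow {p s v k : ℕ} (hp : p.Prime) (hs : 1 ≤ s) :
    Nat.Coprime (v + k * p ^ s) p ↔ Nat.Coprime v p := by
  have hd : p ∣ k * p ^ s := Dvd.dvd.mul_left (dvd_pow_self p (by omega)) k
  have h1 : ∀ w, Nat.Coprime w p ↔ ¬ p ∣ w := fun w => by
    rw [Nat.coprime_comm]; exact hp.coprime_iff_not_dvd
  rw [h1, h1, add_comm, Nat.dvd_add_right hd]

/-- The key divisibility, uniform in the target index set `L`. -/
lemma key_dvd {p : ℕ} (hp : p.Prime) (hodd : Odd p) {s : ℕ} (hs : 2 ≤ s) (L : Finset ℕ)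
    (hL : ∀ q, q < p^(s-1) →
      (((if q ≤ (p^(s-1)-1)/2 then (p-1)/2 else (p+1)/2) % 2 = 1) ↔ q ∈ L)) :
    (X ^ (p ^ s) - 1 : Polynomial (ZMod 2)) ∣ (SPoly p (s+1) - ∑ l ∈ L, dPoly p s l) := by
  set m := p ^ s with hm
  have hmpos : 0 < m := Nat.pow_pos hp.pos
  set f : Polynomial (ZMod 2) := X ^ m - 1 with hf
  rw [← AdjoinRoot.mk_eq_zero, map_sub, sub_eq_zero]
  have h20 : (2 : AdjoinRoot f) = 0 := by
    rw [← map_ofNat (algebraMap (ZMod 2) (AdjoinRoot f)) 2,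
      show ((2 : ZMod 2) = 0) by decide, map_zero]
  have hyy : ∀ y : AdjoinRoot f, y + y = 0 := by
    intro y
    rw [← two_mul, h20, zero_mul]
  have hsmul : ∀ (n : ℕ) (y : AdjoinRoot f), n • y = if n % 2 = 1 then y else 0 := by
    intro n y
    induction n with
    | zero => simp
    | succ n ih =>
      rw [succ_nsmul, ih]
      rcases Nat.even_or_odd n with h | h
      · rw [Nat.even_iff] at h
        rw [if_neg (by omega), if_pos (by omega), zero_add]
      · rw [Nat.odd_iff] at h
        rw [if_pos h, if_neg (by omega), hyy]
  have hxm : (AdjoinRoot.root f) ^ m = 1 := by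
    have h0 : AdjoinRoot.mk f f = 0 := AdjoinRoot.mk_self
    rw [hf, map_sub, map_pow, AdjoinRoot.mk_X, map_one, sub_eq_zero] at h0
    exact h0
  have hmkpow : ∀ n : ℕ, AdjoinRoot.mk f (X ^ n) = (AdjoinRoot.root f) ^ (n % m) := by
    intro n
    conv_lhs => rw [← Nat.div_add_mod n m]
    rw [map_pow, AdjoinRoot.mk_X, pow_add, pow_mul, hxm, one_pow, one_mul]
  set x := AdjoinRoot.root f with hx
  -- compute RHS
  have hRHS : AdjoinRoot.mk f (∑ l ∈ L, dPoly p s l)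
      = ∑ u ∈ Finset.range m, (if Nat.Coprime u p ∧ eulerQuotient p (s-1) u ∈ L
          then x ^ u else 0) := by
    rw [sum_dPoly_eq, map_sum]
    apply Finset.sum_congr rfl
    intro u hu
    rw [Finset.mem_range] at hu
    rw [apply_ite (AdjoinRoot.mk f), map_zero, hmkpow, Nat.mod_eq_of_lt hu]
  -- compute LHS
  have hdec : SPoly p (s+1) = ∑ u ∈ Finset.range (p^(s+1)),
      (if Nat.Coprime u p ∧ eulerQuotient p s u ∈ Finset.Icc ((p^s+1)/2) (p^s-1)
       then (X : Polynomial (ZMod 2))^u else 0) := by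
    have h0 : SPoly p (s+1) = ∑ l ∈ Finset.Icc ((p^s+1)/2) (p^s-1), dPoly p (s+1) l := by
      simp only [SPoly, Nat.add_sub_cancel]
    rw [h0, sum_dPoly_eq, Nat.add_sub_cancel]
  rw [hRHS, hdec, map_sum]
  have hterm : ∀ u : ℕ, AdjoinRoot.mk f (if Nat.Coprime u p ∧ eulerQuotient p s u
        ∈ Finset.Icc ((p^s+1)/2) (p^s-1) then (X : Polynomial (ZMod 2))^u else 0)
      = (if Nat.Coprime u p ∧ eulerQuotient p s u ∈ Finset.Icc ((p^s+1)/2) (p^s-1)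
          then x ^ (u % m) else 0) := by
    intro u
    rw [apply_ite (AdjoinRoot.mk f), map_zero, hmkpow]
  simp only [hterm]
  have hps1 : p ^ (s+1) = m * p := by rw [hm, pow_succ]
  rw [hps1, sum_range_mul_decomp
    (fun u => if Nat.Coprime u p ∧ eulerQuotient p s u ∈ Finset.Icc ((p^s+1)/2) (p^s-1)
      then x ^ (u % m) else 0) p m, Finset.sum_product]
  apply Finset.sum_congr rfl
  intro v hv
  rw [Finset.mem_range] at hv
  have hmod : ∀ k : ℕ, (v + k * m) % m = v := by
    intro k; rw [Nat.add_mul_mod_self_right, Nat.mod_eq_of_lt hv]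
  have hcop : ∀ k : ℕ, Nat.Coprime (v + k * m) p ↔ Nat.Coprime v p := by
    intro k
    rw [hm]
    exact coprime_add_mul_pow hp (by omega)
  simp only [hmod, hcop]
  by_cases hCv : Nat.Coprime v p
  · simp only [eq_true hCv, true_and, if_true]
    rw [← Finset.sum_filter, Finset.sum_const]
    have hcnt := count_key hp hodd hs hCv
    rw [hm]
    rw [hcnt, hsmul]
    have hqlt : eulerQuotient p (s-1) v < p^(s-1) :=
      Nat.mod_lt _ (Nat.pow_pos hp.pos)
    have hiff := hL _ hqlt
    simp only [hiff]
  · simp only [eq_false hCv, false_and, if_false, Finset.sum_const_zero]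

end EQAux

theorem SPoly_congr_one_level_down (p : ℕ) (hp : p.Prime) (hodd : Odd p)
    (r : ℕ) (hr : 3 ≤ r) :
    (p % 4 = 1 →
      (X ^ (p ^ (r - 1)) - 1 : Polynomial (ZMod 2)) ∣ (SPoly p r - SPoly p (r - 1))) ∧
    (p % 4 = 3 →
      (X ^ (p ^ (r - 1)) - 1 : Polynomial (ZMod 2)) ∣ (SPoly p r - SbarPoly p (r - 1))) := by
  obtain ⟨s, rfl⟩ : ∃ s, r = s + 1 := ⟨r - 1, by omega⟩
  have hs : 2 ≤ s := by omega
  have hp3 : 3 ≤ p := by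
    have := hp.two_le; rcases hodd with ⟨t, ht⟩; omega
  have hm'odd : p ^ (s-1) % 2 = 1 := Nat.odd_iff.mp (hodd.pow)
  simp only [Nat.add_sub_cancel]
  constructor
  · intro h4
    have hSP : SPoly p s = ∑ l ∈ Finset.Icc ((p^(s-1)+1)/2) (p^(s-1)-1), dPoly p s l := rfl
    rw [hSP]
    apply EQAux.key_dvd hp hodd hs
    intro q hq
    rw [Finset.mem_Icc]
    split_ifs with h <;> omega
  · intro h4
    have hSP : SbarPoly p s = ∑ l ∈ Finset.range ((p^(s-1)-1)/2 + 1), dPoly p s l := rfl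
    rw [hSP]
    apply EQAux.key_dvd hp hodd hs
    intro q hq
    rw [Finset.mem_range]
    split_ifs with h <;> omega
end

section
/- Let p be an odd prime and r ≥ 3. In F_2[X], S^{(p^r)}(X) ≡ ((p+1)/2)·S^{(p^{r−1})}(X) + ((p−1)/2)·S̄^{(p^{r−1})}(X) (mod X^{p^{r−1}}−1), where coefficients are taken modulo 2. -/
open Polynomial

section NT

/-- Binomial expansion when `b` squares to zero. -/
lemma binom_sq_s12 {R : Type*} [CommRing R] (a b : R) (hb : b ^ 2 = 0) {N : ℕ} (hN : 1 ≤ N) :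
    (a + b) ^ N = a ^ N + (N : R) * a ^ (N - 1) * b := by
  rw [add_comm a b, add_pow]
  rw [← Finset.sum_range_add_sum_Ico _ (show 2 ≤ N + 1 by omega)]
  have h0 : ∑ k ∈ Finset.Ico 2 (N + 1), b ^ k * a ^ (N - k) * (N.choose k : R) = 0 := by
    apply Finset.sum_eq_zero
    intro k hk
    simp only [Finset.mem_Ico] at hk
    have hbk : b ^ k = 0 := by
      have : b ^ k = b ^ 2 * b ^ (k - 2) := by rw [← pow_add]; congr 1; omega
      rw [this, hb, zero_mul]
    rw [hbk, zero_mul, zero_mul]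
  rw [h0, add_zero, Finset.sum_range_succ, Finset.sum_range_one]
  simp only [pow_zero, one_mul, Nat.sub_zero, Nat.choose_zero_right, Nat.cast_one, mul_one,
    pow_one, Nat.choose_one_right]
  ring

/-- `(1+e)^p = 1 + p*e` when `p*e^2 = 0` and `e^3 = 0`, `p` an odd prime. -/
lemma binom_p {R : Type*} [CommRing R] (e : R) {p : ℕ} (hp : p.Prime) (hodd : Odd p)
    (h2 : (p : R) * e ^ 2 = 0) (h3 : e ^ 3 = 0) :
    (1 + e) ^ p = 1 + (p : R) * e := by
  have hp3 : 3 ≤ p := by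
    rcases hodd with ⟨k, hk⟩; have := hp.two_le; omega
  rw [add_comm (1 : R) e, add_pow]
  rw [← Finset.sum_range_add_sum_Ico _ (show 3 ≤ p + 1 by omega)]
  have h0 : ∑ k ∈ Finset.Ico 3 (p + 1), e ^ k * (1 : R) ^ (p - k) * (p.choose k : R) = 0 := by
    apply Finset.sum_eq_zero
    intro k hk
    simp only [Finset.mem_Ico] at hk
    have hek : e ^ k = 0 := by
      have : e ^ k = e ^ 3 * e ^ (k - 3) := by rw [← pow_add]; congr 1; omega
      rw [this, h3, zero_mul]
    rw [hek, zero_mul, zero_mul]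
  rw [h0, add_zero, Finset.sum_range_succ, Finset.sum_range_succ, Finset.sum_range_one]
  have hc2 : (p.choose 2 : ℕ) = (p - 1) / 2 * p := by
    rw [Nat.choose_two_right]
    rcases hodd with ⟨k, hk⟩
    subst hk
    have h1 : 2 * k + 1 - 1 = 2 * k := by omega
    rw [h1]
    have : 2 * k + 1 - 1 = 2 * k := by omega
    rw [Nat.mul_div_assoc _ (⟨k, rfl⟩ : 2 ∣ 2 * k)]
    have : 2 * k / 2 = k := by omega
    rw [this]; ring
  have he2 : e ^ 2 * (1 : R) ^ (p - 2) * (p.choose 2 : R) = 0 := by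
    rw [one_pow, mul_one, hc2]
    push_cast
    calc e ^ 2 * (((p - 1) / 2 : ℕ) * (p : R))
        = (((p - 1) / 2 : ℕ) : R) * ((p : R) * e ^ 2) := by ring
      _ = 0 := by rw [h2, mul_zero]
  rw [he2, add_zero]
  simp only [pow_zero, one_mul, Nat.choose_zero_right, Nat.cast_one, mul_one, pow_one,
    Nat.choose_one_right]
  ring

/-- Existence of the (exact) Euler quotient. -/
lemma exists_quot {p : ℕ} (hp : p.Prime) (s : ℕ) {v : ℕ} (hv : Nat.Coprime v p) :
    ∃ q, v ^ (p ^ (s - 1) * (p - 1)) = 1 + p ^ s * q := by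
  have hv1 : 1 ≤ v := by
    rcases Nat.eq_zero_or_pos v with h | h
    · subst h; rw [Nat.coprime_zero_left] at hv; exact absurd hv hp.ne_one
    · exact h
  rcases Nat.eq_zero_or_pos s with hs | hs
  · subst hs
    refine ⟨v ^ (p ^ (0 - 1) * (p - 1)) - 1, ?_⟩
    have : 1 ≤ v ^ (p ^ (0 - 1) * (p - 1)) := Nat.one_le_pow _ _ hv1
    simp only [pow_zero, one_mul]
    omega
  have hcop : v.Coprime (p ^ s) := hv.pow_right s
  have ht : (p ^ s).totient = p ^ (s - 1) * (p - 1) := Nat.totient_prime_pow hp hs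
  have hmod := Nat.ModEq.pow_totient hcop
  rw [ht] at hmod
  have h1 : 1 ≤ v ^ (p ^ (s - 1) * (p - 1)) := Nat.one_le_pow _ _ hv1
  have hdvd : p ^ s ∣ v ^ (p ^ (s - 1) * (p - 1)) - 1 := (Nat.modEq_iff_dvd' h1).mp hmod.symm
  obtain ⟨q, hq⟩ := hdvd
  exact ⟨q, by omega⟩

lemma eulerQuotient_spec {p s v q : ℕ} (hp : 0 < p)
    (h : v ^ (p ^ (s - 1) * (p - 1)) = 1 + p ^ s * q) :
    eulerQuotient p s v = q % p ^ s := by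
  unfold eulerQuotient
  rw [h]
  have h1 : 1 + p ^ s * q - 1 = p ^ s * q := by omega
  rw [h1, Nat.mul_div_cancel_left q (pow_pos hp s)]
/-- Congruence of Euler quotients across consecutive levels. -/
lemma quot_congr {p : ℕ} (hp : p.Prime) (hodd : Odd p) {s : ℕ} (hs : 2 ≤ s) {v q q' : ℕ}
    (hq : v ^ (p ^ (s - 1) * (p - 1)) = 1 + p ^ s * q)
    (hq' : v ^ (p ^ (s - 2) * (p - 1)) = 1 + p ^ (s - 1) * q') :
    q ≡ q' [MOD p ^ (s - 1)] := by
  have hppos := hp.pos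
  set M := p ^ s * p ^ (s - 1) with hM
  have hpp : p ^ (s - 2) * p = p ^ (s - 1) := by
    rw [← pow_succ]; congr 1; omega
  have hexp : p ^ (s - 2) * (p - 1) * p = p ^ (s - 1) * (p - 1) := by
    rw [← hpp]; ring
  have hkey : (1 : ℕ) + p ^ s * q = (1 + p ^ (s - 1) * q') ^ p := by
    rw [← hq, ← hq', ← pow_mul, hexp]
  -- cast to ZMod M
  have hcast : ((1 + p ^ s * q : ℕ) : ZMod M) = ((1 + p ^ (s - 1) * q' : ℕ) : ZMod M) ^ p := by
    rw [hkey]; push_cast; ring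
  have hme : ((1 + p ^ (s - 1) * q' : ℕ) : ZMod M) = 1 + ((p ^ (s - 1) * q' : ℕ) : ZMod M) := by
    push_cast; ring
  have h2 : (p : ZMod M) * ((p ^ (s - 1) * q' : ℕ) : ZMod M) ^ 2 = 0 := by
    have hcc : (p : ZMod M) * ((p ^ (s - 1) * q' : ℕ) : ZMod M) ^ 2
        = ((p * (p ^ (s - 1) * q') ^ 2 : ℕ) : ZMod M) := by push_cast; ring
    rw [hcc, ZMod.natCast_eq_zero_iff]
    have e : p * (p ^ (s - 1) * q') ^ 2 = M * q' ^ 2 := by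
      rw [hM, mul_pow, ← pow_mul, ← pow_add, ← mul_assoc, ← pow_succ']
      have he : (s - 1) * 2 + 1 = s + (s - 1) := by omega
      rw [he]
    rw [e]
    exact dvd_mul_right M _
  have h3 : ((p ^ (s - 1) * q' : ℕ) : ZMod M) ^ 3 = 0 := by
    have hcc : ((p ^ (s - 1) * q' : ℕ) : ZMod M) ^ 3 = (((p ^ (s - 1) * q') ^ 3 : ℕ) : ZMod M) := by
      push_cast; ring
    rw [hcc, ZMod.natCast_eq_zero_iff, mul_pow]
    have hd3 : M ∣ (p ^ (s - 1)) ^ 3 := by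
      rw [hM, ← pow_add, ← pow_mul]
      exact pow_dvd_pow p (by omega)
    exact hd3.mul_right _
  rw [hme, binom_p _ hp hodd h2 h3] at hcast
  have hps : (p : ZMod M) * ((p ^ (s - 1) * q' : ℕ) : ZMod M) = ((p ^ s * q' : ℕ) : ZMod M) := by
    have hps' : p * (p ^ (s - 1) * q') = p ^ s * q' := by
      rw [← mul_assoc, ← pow_succ']; congr 2; omega
    rw [← hps']; push_cast; ring
  rw [hps] at hcast
  have : ((p ^ s * q : ℕ) : ZMod M) = ((p ^ s * q' : ℕ) : ZMod M) := by
    have h1 : ((1 : ℕ) : ZMod M) + ((p ^ s * q : ℕ) : ZMod M)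
        = ((1 : ℕ) : ZMod M) + ((p ^ s * q' : ℕ) : ZMod M) := by
      push_cast at hcast ⊢
      linear_combination hcast
    exact add_left_cancel h1
  have hmodeq : p ^ s * q ≡ p ^ s * q' [MOD M] := (ZMod.natCast_eq_natCast_iff _ _ _).mp this
  rw [hM] at hmodeq
  exact Nat.ModEq.mul_left_cancel' (by positivity) hmodeq

/-- Shift formula for the Euler quotient. -/
lemma quot_shift {p : ℕ} (hp : p.Prime) {s : ℕ} (hs : 1 ≤ s) {v q t qt : ℕ}
    (hq : v ^ (p ^ (s - 1) * (p - 1)) = 1 + p ^ s * q)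
    (hqt : (v + t * p ^ s) ^ (p ^ (s - 1) * (p - 1)) = 1 + p ^ s * qt) :
    qt ≡ q + p ^ (s - 1) * (p - 1) * v ^ (p ^ (s - 1) * (p - 1) - 1) * t [MOD p ^ s] := by
  have hppos := hp.pos
  set m := p ^ s with hm
  set N := p ^ (s - 1) * (p - 1) with hN
  have hmpos : 0 < m := pow_pos hppos s
  have hN1 : 1 ≤ N := Nat.mul_pos (pow_pos hppos _) (by have := hp.two_le; omega)
  have hb : ((t * m : ℕ) : ZMod (m ^ 2)) ^ 2 = 0 := by
    have : ((t * m : ℕ) : ZMod (m ^ 2)) ^ 2 = (((t * m) ^ 2 : ℕ) : ZMod (m ^ 2)) := by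
      push_cast; ring
    rw [this, ZMod.natCast_eq_zero_iff, mul_pow]
    exact Dvd.dvd.mul_left dvd_rfl _
  have hkey : ((1 + m * qt : ℕ) : ZMod (m ^ 2))
      = ((1 + m * q + m * (N * v ^ (N - 1) * t) : ℕ) : ZMod (m ^ 2)) := by
    have h1 : ((1 + m * qt : ℕ) : ZMod (m ^ 2)) = (((v + t * m : ℕ) : ZMod (m ^ 2))) ^ N := by
      rw [← hqt]; push_cast; ring
    have h2 : (((v + t * m : ℕ) : ZMod (m ^ 2))) ^ N
        = ((v : ℕ) : ZMod (m ^ 2)) ^ N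
          + (N : ZMod (m ^ 2)) * ((v : ℕ) : ZMod (m ^ 2)) ^ (N - 1) * ((t * m : ℕ) : ZMod (m ^ 2)) := by
      push_cast
      exact binom_sq_s12 _ _ (by push_cast at hb ⊢; exact hb) hN1
    have h3 : ((v : ℕ) : ZMod (m ^ 2)) ^ N = ((1 + m * q : ℕ) : ZMod (m ^ 2)) := by
      rw [← hq]; push_cast; ring
    rw [h1, h2, h3]
    push_cast
    ring
  have hmodeq : 1 + m * qt ≡ 1 + m * q + m * (N * v ^ (N - 1) * t) [MOD m ^ 2] :=
    (ZMod.natCast_eq_natCast_iff _ _ _).mp hkey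
  have hmodeq2 : m * qt ≡ m * (q + N * v ^ (N - 1) * t) [MOD m * m] := by
    have he : 1 + m * q + m * (N * v ^ (N - 1) * t) = 1 + m * (q + N * v ^ (N - 1) * t) := by ring
    rw [he, pow_two] at hmodeq
    exact Nat.ModEq.add_left_cancel' 1 hmodeq
  exact Nat.ModEq.mul_left_cancel' (by omega) hmodeq2
/-- The central counting lemma. -/
lemma main_count {p : ℕ} (hp : p.Prime) (hodd : Odd p) {s : ℕ} (hs : 2 ≤ s)
    {v : ℕ} (hv : Nat.Coprime v p) :
    ((Finset.range p).filter (fun t =>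
        eulerQuotient p s (v + t * p ^ s) ∈ Finset.Icc ((p ^ s + 1) / 2) (p ^ s - 1))).card
      = (p - 1) / 2 +
        (if (p ^ (s - 1) + 1) / 2 ≤ eulerQuotient p (s - 1) v then 1 else 0) := by
  have hppos := hp.pos
  have hp3 : 3 ≤ p := by rcases hodd with ⟨k, hk⟩; have := hp.two_le; omega
  set m := p ^ s with hm
  set m' := p ^ (s - 1) with hm'
  have hm'p : m' * p = m := by rw [hm', hm, ← pow_succ]; congr 1; omega
  have hm'pos : 0 < m' := pow_pos hppos _
  have hm'3 : 3 ≤ m' := le_trans hp3 (Nat.le_self_pow (by omega) p)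
  have hm'odd : m' % 2 = 1 := Nat.odd_iff.mp (hodd.pow)
  have hpodd : p % 2 = 1 := Nat.odd_iff.mp hodd
  set N := p ^ (s - 1) * (p - 1) with hN
  obtain ⟨q, hq⟩ := exists_quot hp s hv
  obtain ⟨q', hq'0⟩ := exists_quot hp (s - 1) hv
  have hss : s - 1 - 1 = s - 2 := by omega
  rw [hss] at hq'0
  have hc : eulerQuotient p (s - 1) v = q' % m' := by
    have := eulerQuotient_spec (s := s - 1) hppos (by rw [hss]; exact hq'0)
    rw [this]
  set c := q' % m' with hcdef
  have hclt : c < m' := Nat.mod_lt _ hm'pos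
  have hqq' : q ≡ q' [MOD m'] := quot_congr hp hodd hs hq hq'0
  set F : ℕ → ℕ := fun t => eulerQuotient p s (v + t * m) with hF
  set W := N * v ^ (N - 1) with hW
  -- basic properties of F
  have hFprop : ∀ t : ℕ, F t < m ∧ F t ≡ q + W * t [MOD m] := by
    intro t
    have hcop : (v + t * m).Coprime p := by
      have : v + t * m = v + (t * p ^ (s - 1)) * p := by
        rw [mul_assoc, hm'p]
      rw [this, Nat.coprime_add_mul_right_left]
      exact hv
    obtain ⟨qt, hqt⟩ := exists_quot hp s hcop
    have hFt : F t = qt % m := eulerQuotient_spec hppos hqt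
    have hsh := quot_shift hp (by omega) hq hqt
    constructor
    · rw [hFt]; exact Nat.mod_lt _ (by positivity)
    · rw [hFt]
      exact (Nat.mod_modEq qt m).trans hsh
  -- F t ≡ c mod m'
  have hFc : ∀ t : ℕ, F t % m' = c := by
    intro t
    obtain ⟨hlt, hme⟩ := hFprop t
    have hm'm : m' ∣ m := ⟨p, hm'p.symm⟩
    have h1 : F t ≡ q + W * t [MOD m'] := hme.of_dvd hm'm
    have h2 : W * t ≡ 0 [MOD m'] := by
      have : m' ∣ W * t := by
        rw [hW, hN]
        exact Dvd.dvd.mul_right (Dvd.dvd.mul_right (Dvd.dvd.mul_right dvd_rfl _) _) _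
      exact (Nat.modEq_zero_iff_dvd).mpr this
    have h3 : F t ≡ q [MOD m'] := by
      calc F t ≡ q + W * t [MOD m'] := h1
        _ ≡ q + 0 [MOD m'] := Nat.ModEq.add_left q h2
        _ = q := by omega
    have h4 : F t ≡ q' [MOD m'] := h3.trans hqq'
    have := h4.of_dvd dvd_rfl
    unfold Nat.ModEq at h4
    omega
  -- injectivity of F on range p
  have hFinj : Set.InjOn F (Finset.range p) := by
    intro t1 ht1 t2 ht2 heq
    simp only [Finset.coe_range, Set.mem_Iio] at ht1 ht2
    obtain ⟨hlt1, hme1⟩ := hFprop t1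
    obtain ⟨hlt2, hme2⟩ := hFprop t2
    have h1 : q + W * t1 ≡ q + W * t2 [MOD m] := (hme1.symm.trans (heq ▸ hme2 : F t1 ≡ q + W * t2 [MOD m]))
    have h2 : W * t1 ≡ W * t2 [MOD m] := Nat.ModEq.add_left_cancel' q h1
    have h3 : p ^ (s - 1) * ((p - 1) * v ^ (N - 1) * t1)
        ≡ p ^ (s - 1) * ((p - 1) * v ^ (N - 1) * t2) [MOD p ^ (s - 1) * p] := by
      have e : ∀ t : ℕ, W * t = p ^ (s - 1) * ((p - 1) * v ^ (N - 1) * t) := by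
        intro t; rw [hW, hN]; ring
      rw [← e, ← e, hm'p]
      exact h2
    have h4 : (p - 1) * v ^ (N - 1) * t1 ≡ (p - 1) * v ^ (N - 1) * t2 [MOD p] :=
      Nat.ModEq.mul_left_cancel' (by positivity) h3
    have hcop2 : Nat.gcd p ((p - 1) * v ^ (N - 1)) = 1 := by
      apply Nat.Coprime.mul_right
      · have : ¬ p ∣ (p - 1) := by
          intro hdvd
          have := Nat.le_of_dvd (by omega) hdvd
          omega
        exact hp.coprime_iff_not_dvd.mpr this
      · exact (hp.coprime_iff_not_dvd.mpr (fun hd => by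
          have := hv
          rw [Nat.coprime_comm] at this
          exact absurd ((Nat.Prime.dvd_of_dvd_pow hp hd)) (hp.coprime_iff_not_dvd.mp this)))
    have h5 : t1 ≡ t2 [MOD p] := Nat.ModEq.cancel_left_of_coprime hcop2 h4
    unfold Nat.ModEq at h5
    rw [Nat.mod_eq_of_lt ht1, Nat.mod_eq_of_lt ht2] at h5
    exact h5
  -- G and the image identification
  set G : ℕ → ℕ := fun j => c + j * m' with hG
  have hGinj : Set.InjOn G (Finset.range p) := by
    intro j1 _ j2 _ heq
    simp only [hG] at heq
    have := Nat.eq_of_mul_eq_mul_right hm'pos (by omega : j1 * m' = j2 * m')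
    exact this
  have hAB : (Finset.range p).image F = (Finset.range p).image G := by
    apply Finset.eq_of_subset_of_card_le
    · intro a ha
      simp only [Finset.mem_image, Finset.mem_range] at ha ⊢
      obtain ⟨t, ht, rfl⟩ := ha
      refine ⟨F t / m', ?_, ?_⟩
      · have hlt := (hFprop t).1
        rw [Nat.div_lt_iff_lt_mul hm'pos]
        calc F t < m := hlt
          _ = p * m' := by rw [← hm'p]; ring
      · simp only [hG]
        have h1 := Nat.mod_add_div (F t) m'
        rw [hFc t] at h1
        have h2 : F t / m' * m' = m' * (F t / m') := Nat.mul_comm _ _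
        omega
    · rw [Finset.card_image_of_injOn hGinj, Finset.card_image_of_injOn hFinj]
  -- transfer the count
  have hcount : ((Finset.range p).filter (fun t => F t ∈ Finset.Icc ((m + 1) / 2) (m - 1))).card
      = ((Finset.range p).filter (fun j => G j ∈ Finset.Icc ((m + 1) / 2) (m - 1))).card := by
    have e1 : ((Finset.range p).filter (fun t => F t ∈ Finset.Icc ((m + 1) / 2) (m - 1))).card
        = (((Finset.range p).image F).filter (fun a => a ∈ Finset.Icc ((m + 1) / 2) (m - 1))).card := by
      rw [Finset.filter_image]
      rw [Finset.card_image_of_injOn (hFinj.mono (Finset.coe_subset.mpr (Finset.filter_subset _ _)))]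
    have e2 : ((Finset.range p).filter (fun j => G j ∈ Finset.Icc ((m + 1) / 2) (m - 1))).card
        = (((Finset.range p).image G).filter (fun a => a ∈ Finset.Icc ((m + 1) / 2) (m - 1))).card := by
      rw [Finset.filter_image]
      rw [Finset.card_image_of_injOn (hGinj.mono (Finset.coe_subset.mpr (Finset.filter_subset _ _)))]
    rw [e1, e2, hAB]
  -- arithmetic count for G
  set hNum := (p - 1) / 2 with hh
  set lo := if (m' + 1) / 2 ≤ c then hNum else hNum + 1 with hlo
  have hiff : ∀ j < p, (G j ∈ Finset.Icc ((m + 1) / 2) (m - 1)) ↔ lo ≤ j := by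
    intro j hj
    simp only [hG, Finset.mem_Icc]
    have hKm : hNum * m' + hNum * m' + m' = m := by
      have hp2h : 2 * hNum + 1 = p := by omega
      calc hNum * m' + hNum * m' + m' = (2 * hNum + 1) * m' := by ring
        _ = p * m' := by rw [hp2h]
        _ = m := by rw [mul_comm, hm'p]
    have hitelo : lo = hNum ∨ ((m' + 1) / 2 ≤ c → False) ∧ lo = hNum + 1 := by
      rw [hlo]
      by_cases hup : (m' + 1) / 2 ≤ c
      · left; rw [if_pos hup]
      · right; exact ⟨fun hc => hup hc, by rw [if_neg hup]⟩
    rcases lt_trichotomy j hNum with hjh | hjh | hjh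
    · have hjm : j * m' + m' ≤ hNum * m' := by
        calc j * m' + m' = (j + 1) * m' := by ring
          _ ≤ hNum * m' := Nat.mul_le_mul_right _ (by omega)
      rcases hitelo with h1 | ⟨h1, h2⟩ <;> omega
    · subst hjh
      rcases hitelo with h1 | ⟨h1, h2⟩
      · have hup : (m' + 1) / 2 ≤ c := by
          by_contra hup
          rw [hlo, if_neg hup] at h1
          omega
        omega
      · have hup : ¬ (m' + 1) / 2 ≤ c := fun hc => h1 hc
        omega
    · have hjm1 : hNum * m' + m' ≤ j * m' := by
        calc hNum * m' + m' = (hNum + 1) * m' := by ring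
          _ ≤ j * m' := Nat.mul_le_mul_right _ (by omega)
      have hjm2 : j * m' ≤ hNum * m' + hNum * m' := by
        calc j * m' ≤ (2 * hNum) * m' := Nat.mul_le_mul_right _ (by omega)
          _ = hNum * m' + hNum * m' := by ring
      rcases hitelo with h1 | ⟨h1, h2⟩ <;> omega
  have hfilter : (Finset.range p).filter (fun j => G j ∈ Finset.Icc ((m + 1) / 2) (m - 1))
      = Finset.Ico lo p := by
    apply Finset.ext
    intro j
    simp only [Finset.mem_filter, Finset.mem_range, Finset.mem_Ico]
    constructor
    · rintro ⟨hjp, hmem⟩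
      exact ⟨(hiff j hjp).mp hmem, hjp⟩
    · rintro ⟨hloj, hjp⟩
      exact ⟨hjp, (hiff j hjp).mpr hloj⟩
  have hfinal : ((Finset.range p).filter (fun t => F t ∈ Finset.Icc ((m + 1) / 2) (m - 1))).card
      = hNum + (if (m' + 1) / 2 ≤ c then 1 else 0) := by
    rw [hcount, hfilter, Nat.card_Ico, hlo]
    by_cases hup : (m' + 1) / 2 ≤ c
    · rw [if_pos hup, if_pos hup]; omega
    · rw [if_neg hup, if_neg hup]; omega
  rw [hc]
  exact hfinal
lemma sum_range_mul_eq {M : Type*} [AddCommMonoid M] (g : ℕ → M) (a b : ℕ) :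
    ∑ n ∈ Finset.range (a * b), g n
      = ∑ t ∈ Finset.range b, ∑ v ∈ Finset.range a, g (v + t * a) := by
  induction b with
  | zero => simp
  | succ b ih =>
    have key : a * (b + 1) = a * b + a := by ring
    rw [key, Finset.sum_range_add, ih, Finset.sum_range_succ]
    congr 1
    apply Finset.sum_congr rfl
    intro v _
    congr 1
    ring

lemma level_sum_eq {R : Type*} [AddCommMonoid R] (g : ℕ → R) (p r : ℕ) (L : Finset ℕ) :
    ∑ l ∈ L, ∑ n ∈ levelSetD p r l, g n
      = ∑ n ∈ (Finset.range (p ^ r)).filter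
          (fun u => Nat.Coprime u p ∧ eulerQuotient p (r - 1) u ∈ L), g n := by
  unfold levelSetD
  simp only [← Finset.filter_filter]
  exact Finset.sum_fiberwise_eq_sum_filter _ _ _ _
theorem SPoly_congr_combination (p : ℕ) (hp : p.Prime) (hodd : Odd p)
    (r : ℕ) (hr : 3 ≤ r) :
    (X ^ (p ^ (r - 1)) - 1 : Polynomial (ZMod 2)) ∣
      (SPoly p r -
        (C ((((p + 1) / 2 : ℕ) : ZMod 2)) * SPoly p (r - 1) +
         C ((((p - 1) / 2 : ℕ) : ZMod 2)) * SbarPoly p (r - 1))) := by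
  have hp3 : 3 ≤ p := by rcases hodd with ⟨k, hk⟩; have := hp.two_le; omega
  have hpodd : p % 2 = 1 := Nat.odd_iff.mp hodd
  have hr2 : r - 1 - 1 = r - 2 := by omega
  have hm'pos : 0 < p ^ (r - 2) := pow_pos hp.pos _
  have hm'odd : p ^ (r - 2) % 2 = 1 := Nat.odd_iff.mp hodd.pow
  rw [← Ideal.mem_span_singleton, ← Ideal.Quotient.eq_zero_iff_mem, map_sub, sub_eq_zero,
    map_add, map_mul, map_mul]
  have hx : (Ideal.Quotient.mk (Ideal.span {(X : Polynomial (ZMod 2)) ^ p ^ (r - 1) - 1}) X)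
      ^ p ^ (r - 1) = 1 := by
    have h0 : Ideal.Quotient.mk (Ideal.span {(X : Polynomial (ZMod 2)) ^ p ^ (r - 1) - 1})
        ((X : Polynomial (ZMod 2)) ^ p ^ (r - 1) - 1) = 0 :=
      Ideal.Quotient.eq_zero_iff_mem.mpr (Ideal.subset_span rfl)
    rw [map_sub, map_pow, map_one, sub_eq_zero] at h0
    exact h0
  simp only [SPoly, SbarPoly, dPoly, map_sum, map_pow, map_natCast]
  rw [level_sum_eq, level_sum_eq, level_sum_eq]
  simp only [hr2]
  have hpr : p ^ r = p ^ (r - 1) * p := by rw [← pow_succ]; congr 1; omega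
  rw [hpr]
  conv_lhs => rw [Finset.sum_filter,
    sum_range_mul_eq (fun n => if Nat.Coprime n p ∧ eulerQuotient p (r - 1) n ∈
        Finset.Icc ((p ^ (r - 1) + 1) / 2) (p ^ (r - 1) - 1)
      then Ideal.Quotient.mk (Ideal.span {(X : Polynomial (ZMod 2)) ^ p ^ (r - 1) - 1}) X ^ n
      else 0) (p ^ (r - 1)) p, Finset.sum_comm]
  conv_rhs => rw [Finset.sum_filter, Finset.sum_filter, Finset.mul_sum, Finset.mul_sum,
    ← Finset.sum_add_distrib]
  apply Finset.sum_congr rfl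
  intro v hv
  rw [Finset.mem_range] at hv
  by_cases hcop : Nat.Coprime v p
  · -- coprime case
    have hterm : ∀ t ∈ Finset.range p,
        (if Nat.Coprime (v + t * p ^ (r - 1)) p ∧
            eulerQuotient p (r - 1) (v + t * p ^ (r - 1)) ∈
              Finset.Icc ((p ^ (r - 1) + 1) / 2) (p ^ (r - 1) - 1)
          then Ideal.Quotient.mk (Ideal.span {(X : Polynomial (ZMod 2)) ^ p ^ (r - 1) - 1}) X
            ^ (v + t * p ^ (r - 1))
          else 0)
        = (if eulerQuotient p (r - 1) (v + t * p ^ (r - 1)) ∈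
              Finset.Icc ((p ^ (r - 1) + 1) / 2) (p ^ (r - 1) - 1)
          then Ideal.Quotient.mk (Ideal.span {(X : Polynomial (ZMod 2)) ^ p ^ (r - 1) - 1}) X ^ v
          else 0) := by
      intro t _
      have hc : Nat.Coprime (v + t * p ^ (r - 1)) p := by
        have he : v + t * p ^ (r - 1) = v + (t * p ^ (r - 2)) * p := by
          rw [mul_assoc, ← pow_succ]
          congr 3
          omega
        rw [he, Nat.coprime_add_mul_right_left]
        exact hcop
      have hxeq : Ideal.Quotient.mk (Ideal.span {(X : Polynomial (ZMod 2)) ^ p ^ (r - 1) - 1}) X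
          ^ (v + t * p ^ (r - 1))
          = Ideal.Quotient.mk (Ideal.span {(X : Polynomial (ZMod 2)) ^ p ^ (r - 1) - 1}) X ^ v := by
        rw [pow_add, mul_comm t (p ^ (r - 1)), pow_mul, hx, one_pow, mul_one]
      rw [hxeq]
      exact if_congr (and_iff_right hc) rfl rfl
    rw [Finset.sum_congr rfl hterm, ← Finset.sum_filter, Finset.sum_const]
    rw [main_count hp hodd (show 2 ≤ r - 1 by omega) hcop, hr2]
    have hclt : eulerQuotient p (r - 2) v < p ^ (r - 2) := Nat.mod_lt _ hm'pos
    by_cases hup : (p ^ (r - 2) + 1) / 2 ≤ eulerQuotient p (r - 2) v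
    · rw [if_pos hup,
        if_pos (⟨hcop, Finset.mem_Icc.mpr ⟨hup, by omega⟩⟩ :
          Nat.Coprime v p ∧ eulerQuotient p (r - 2) v ∈
            Finset.Icc ((p ^ (r - 2) + 1) / 2) (p ^ (r - 2) - 1)),
        if_neg (fun hcon => by
          have := Finset.mem_range.mp hcon.2
          omega)]
      have he : (p - 1) / 2 + 1 = (p + 1) / 2 := by omega
      rw [he, nsmul_eq_mul, mul_zero, add_zero]
    · rw [if_neg hup,
        if_neg (fun hcon => by
          have := (Finset.mem_Icc.mp hcon.2).1
          omega),
        if_pos (⟨hcop, Finset.mem_range.mpr (by omega)⟩ :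
          Nat.Coprime v p ∧ eulerQuotient p (r - 2) v ∈
            Finset.range ((p ^ (r - 2) - 1) / 2 + 1))]
      rw [add_zero, nsmul_eq_mul, mul_zero, zero_add]
  · -- non-coprime case
    have hL : ∑ t ∈ Finset.range p,
        (if Nat.Coprime (v + t * p ^ (r - 1)) p ∧
            eulerQuotient p (r - 1) (v + t * p ^ (r - 1)) ∈
              Finset.Icc ((p ^ (r - 1) + 1) / 2) (p ^ (r - 1) - 1)
          then Ideal.Quotient.mk (Ideal.span {(X : Polynomial (ZMod 2)) ^ p ^ (r - 1) - 1}) X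
            ^ (v + t * p ^ (r - 1))
          else 0) = 0 := by
      apply Finset.sum_eq_zero
      intro t _
      rw [if_neg]
      rintro ⟨hc, -⟩
      apply hcop
      have he : v + t * p ^ (r - 1) = v + (t * p ^ (r - 2)) * p := by
        rw [mul_assoc, ← pow_succ]
        congr 3
        omega
      rw [he, Nat.coprime_add_mul_right_left] at hc
      exact hc
    rw [hL, if_neg (fun hcon => hcop hcon.1), if_neg (fun hcon => hcop hcon.1),
      mul_zero, mul_zero, add_zero]
end NT
end
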